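/- arXiv:1602.08585 — 8 statements merged into one kernel-verified Lean document; each statement's English description precedes it below -/
import Mathlib

section
/- Let A ∈ S^{d×n}. The action of F_2^d on the torus T^n = (ℝ/ℤ)^n determined by A is free if and only if for every nonzero x ∈ F_2^d there exists a column index j (1 ≤ j ≤ n) such that s_j(x) = 1, i.e., the sum in the group S of the entries A_{ij} over all rows i with x_i = 1 equals 1. -/
/-- The group `S = {0,1,2,3}`, realized as `F₂ × F₂` via `s ↦ (α s, β s)`:
`0 ↔ (0,0)`, `1 ↔ (1,1)`, `2 ↔ (1,0)`, `3 ↔ (0,1)`. -/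
abbrev S4 : Type := ZMod 2 × ZMod 2

def Sα (s : S4) : ZMod 2 := s.1
def Sβ (s : S4) : ZMod 2 := s.2

def s0 : S4 := (0, 0)
def s1 : S4 := (1, 1)
def s2 : S4 := (1, 0)
def s3 : S4 := (0, 1)

/-- The action of `s ∈ S` on the circle `ℝ/ℤ`: `s·[t] = [(-1)^(α s + β s) t + (β s)/2]`. -/
noncomputable def circleAct (s : S4) (t : UnitAddCircle) : UnitAddCircle :=
  ((-1 : ℤ) ^ (Sα s + Sβ s).val) • t + (↑((((Sβ s).val : ℝ)) / 2) : UnitAddCircle)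


lemma s1_act (t : UnitAddCircle) : circleAct s1 t = t + ((1/2 : ℝ) : UnitAddCircle) := by
  show ((-1 : ℤ) ^ ((1 + 1 : ZMod 2)).val) • t + _ = _
  have h1 : ((1 + 1 : ZMod 2)).val = 0 := rfl
  have h2 : ((1 : ZMod 2)).val = 1 := rfl
  rw [h1]
  show _ • t + (↑((((1 : ZMod 2).val : ℝ)) / 2) : UnitAddCircle) = _
  rw [h2]
  norm_num

lemma s1_nofix (t : UnitAddCircle) : circleAct s1 t ≠ t := by
  rw [s1_act]
  intro h
  have h' : ((1/2 : ℝ) : UnitAddCircle) = 0 := by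
    have := congrArg (fun z => -t + z) h
    simpa [← add_assoc] using this
  rw [AddCircle.coe_eq_zero_iff] at h'
  obtain ⟨m, hm⟩ := h'
  have : (m : ℝ) = 1/2 := by simpa using hm
  have h2 : (2 : ℝ) * m = 1 := by rw [this]; norm_num
  have : (2 * m : ℤ) = 1 := by exact_mod_cast h2
  omega

lemma hasfix (s : S4) (h : s ≠ s1) : ∃ t, circleAct s t = t := by
  have : s = s0 ∨ s = s1 ∨ s = s2 ∨ s = s3 := by revert s; decide
  rcases this with rfl | rfl | rfl | rfl
  · exact ⟨0, by simp [circleAct, Sα, Sβ, s0]⟩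
  · exact absurd rfl h
  · exact ⟨0, by simp [circleAct, Sα, Sβ, s2]⟩
  · refine ⟨((1/4 : ℝ) : UnitAddCircle), ?_⟩
    show ((-1 : ℤ) ^ ((0 + 1 : ZMod 2)).val) • _ +
      (↑((((1 : ZMod 2).val : ℝ)) / 2) : UnitAddCircle) = _
    have h1 : ((0 + 1 : ZMod 2)).val = 1 := rfl
    have h2 : ((1 : ZMod 2)).val = 1 := rfl
    rw [h1, h2]
    rw [pow_one, neg_one_zsmul, ← AddCircle.coe_neg, ← AddCircle.coe_add]
    norm_num

/-- `s_j(x)`: the sum in the group `S` of the entries `A i j` over all rows `i` with `x i = 1`. -/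
def colSum {d : ℕ} {ι : Type*} (A : Matrix (Fin d) ι S4) (x : Fin d → ZMod 2) (j : ι) : S4 :=
  ∑ i, (x i).val • A i j

/-- The action of `x ∈ F₂^d` on the torus `T^n` determined by the matrix `A`. -/
noncomputable def torusAct {d n : ℕ} (A : Matrix (Fin d) (Fin n) S4)
    (x : Fin d → ZMod 2) (p : Fin n → UnitAddCircle) : Fin n → UnitAddCircle :=
  fun j => circleAct (colSum A x j) (p j)

/-- the action of `F₂^d` on `T^n` determined by `A` is free iff for every
nonzero `x ∈ F₂^d` there is a column `j` with `s_j(x) = 1`. -/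
theorem freeness_criterion {d n : ℕ} (A : Matrix (Fin d) (Fin n) S4) :
    (∀ x : Fin d → ZMod 2, x ≠ 0 → ∀ p : Fin n → UnitAddCircle, torusAct A x p ≠ p) ↔
    (∀ x : Fin d → ZMod 2, x ≠ 0 → ∃ j : Fin n, colSum A x j = s1) := by
  constructor
  · intro hfree x hx
    by_contra hc
    push_neg at hc
    choose t ht using fun j => hasfix (colSum A x j) (hc j)
    exact hfree x hx t (funext ht)
  · intro hcrit x hx p hp
    obtain ⟨j, hj⟩ := hcrit x hx
    have := congrFun hp j
    rw [torusAct] at this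
    rw [hj] at this
    exact s1_nofix (p j) this
end

section
/- Let d ≥ 2 and let A = [A_0, A_1] ∈ S^{d×(d−1+d(d−1)/2)}. Then w(A) − (1 + σ_1)^{d−1} ∈ J, where σ_1 = x_1 + … + x_d. Equivalently, since w(A) = Π_{1≤i<j≤d}(1 + x_i + x_j), one has Π_{1≤i<j≤d}(1 + x_i + x_j) ≡ (1 + σ_1)^{d−1} mod J. -/
open MvPolynomial

/-- The linear form `α_j^A = Σ_i α(A_{ij}) x_i`. -/
noncomputable def alphaP {d : ℕ} {ι : Type*} (A : Matrix (Fin d) ι S4) (j : ι) :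
    MvPolynomial (Fin d) (ZMod 2) := ∑ i, C (Sα (A i j)) * X i

/-- The linear form `β_j^A = Σ_i β(A_{ij}) x_i`. -/
noncomputable def betaP {d : ℕ} {ι : Type*} (A : Matrix (Fin d) ι S4) (j : ι) :
    MvPolynomial (Fin d) (ZMod 2) := ∑ i, C (Sβ (A i j)) * X i

/-- `θ_j^A = α_j^A · β_j^A`. -/
noncomputable def thetaP {d : ℕ} {ι : Type*} (A : Matrix (Fin d) ι S4) (j : ι) :
    MvPolynomial (Fin d) (ZMod 2) := alphaP A j * betaP A j

/-- The characteristic ideal `I_A = ⟨θ_1^A, …, θ_n^A⟩`. -/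
noncomputable def charIdeal {d : ℕ} {ι : Type*} (A : Matrix (Fin d) ι S4) :
    Ideal (MvPolynomial (Fin d) (ZMod 2)) := Ideal.span (Set.range (thetaP A))

/-- The Stiefel–Whitney polynomial `w(A) = Π_j (1 + α_j^A + β_j^A)`. -/
noncomputable def swPoly {d : ℕ} {ι : Type*} [Fintype ι] (A : Matrix (Fin d) ι S4) :
    MvPolynomial (Fin d) (ZMod 2) := ∏ j, (1 + alphaP A j + betaP A j)

/-- The ideal `J = ⟨{x_i² + x_j² : i ≠ j} ∪ {x_i x_j : i ≠ j}⟩`. -/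
noncomputable def Jideal (d : ℕ) : Ideal (MvPolynomial (Fin d) (ZMod 2)) :=
  Ideal.span ({q | ∃ i j : Fin d, i ≠ j ∧ q = X i ^ 2 + X j ^ 2} ∪
              {q | ∃ i j : Fin d, i ≠ j ∧ q = X i * X j})

/-- `A₀ ∈ S^{d×(d-1)}`: the `l`-th column has entry `1` in rows `l` and `d`, `0` elsewhere. -/
def matA0 (d : ℕ) : Matrix (Fin d) (Fin (d - 1)) S4 :=
  fun i l => if i.val = l.val ∨ i.val = d - 1 then s1 else s0

/-- Index set for the columns of `A₁`: pairs `1 ≤ i < j ≤ d`. -/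
abbrev PairIdx (d : ℕ) : Type := {p : Fin d × Fin d // p.1 < p.2}

/-- `A₁ ∈ S^{d×(d(d-1)/2)}`: the column indexed by `i < j` has entry `2` in row `i`,
entry `3` in row `j` and `0` elsewhere. -/
def matA1 (d : ℕ) : Matrix (Fin d) (PairIdx d) S4 :=
  fun i p => if i = p.1.1 then s2 else if i = p.1.2 then s3 else s0

/-- `A = [A₀, A₁]`. -/
def matA (d : ℕ) : Matrix (Fin d) (Fin (d - 1) ⊕ PairIdx d) S4 :=
  Matrix.fromCols (matA0 d) (matA1 d)

/-- `B ∈ S^{d×1}`: all entries `2`. -/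
def matB (d : ℕ) : Matrix (Fin d) (Fin 1) S4 := fun _ _ => s2

/-- `C ∈ S^{d×1}`: entry `2` in row `1`, `0` elsewhere. -/
def matC (d : ℕ) : Matrix (Fin d) (Fin 1) S4 := fun i _ => if i.val = 0 then s2 else s0

/-- `E = [A,B,C,C]` (the case `d ≡ 0 mod 2`). -/
def matE0 (d : ℕ) := Matrix.fromCols (matA d)
  (Matrix.fromCols (matB d) (Matrix.fromCols (matC d) (matC d)))

/-- `E = [A,B,B]` (the case `d ≡ 1 mod 4`). -/
def matE1 (d : ℕ) := Matrix.fromCols (matA d) (Matrix.fromCols (matB d) (matB d))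

/-- `F = [E,C,C,C,C] = [A,C,C,C,C]` (the case `d ≡ 3 mod 4`; there `E = A`). -/
def matF3 (d : ℕ) := Matrix.fromCols (matA d)
  (Matrix.fromCols (matC d)
    (Matrix.fromCols (matC d) (Matrix.fromCols (matC d) (matC d))))



section Core
variable {R : Type*} [CommRing R]

lemma pow_one_add_expand (w : R) (hw : w * w * w = 0) (n : ℕ) :
    (1 + w) ^ n = 1 + (n : R) * w + (n.choose 2 : R) * (w * w) := by
  induction n with
  | zero => simp
  | succ n ih =>
      have hC : ((n + 1).choose 2 : R) = (n.choose 2 : R) + n := by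
        rw [Nat.choose_succ_succ]
        push_cast [Nat.choose_one_right]
        ring
      rw [pow_succ, ih, hC]
      push_cast
      linear_combination (n.choose 2 : R) * hw

lemma prod_one_add_lin {d : ℕ} {y : Fin d → R} {t z : R}
    (h1 : ∀ i j, i ≠ j → y i * y j = 0)
    (h3 : ∀ i, t * y i = 0) (hz2 : z * z = t) (htz : t * z = 0)
    (s : Finset (Fin d)) (hz : ∀ i ∈ s, z * y i = 0) :
    ∏ i ∈ s, (1 + y i + z)
      = 1 + (s.card : R) * z + (∑ i ∈ s, y i) + (s.card.choose 2 : R) * t := by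
  classical
  induction s using Finset.induction with
  | empty => simp
  | @insert b s hb ih =>
      rw [Finset.prod_insert hb, ih (fun i hi => hz i (Finset.mem_insert_of_mem hi))]
      have hbz : y b * z = 0 := by
        rw [mul_comm]; exact hz b (Finset.mem_insert_self b s)
      have hbσ : y b * (∑ i ∈ s, y i) = 0 := by
        rw [Finset.mul_sum]
        refine Finset.sum_eq_zero fun i hi => h1 b i ?_
        rintro rfl; exact hb hi
      have hbt : y b * t = 0 := by rw [mul_comm]; exact h3 b
      have hzσ : z * (∑ i ∈ s, y i) = 0 := by
        rw [Finset.mul_sum]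
        exact Finset.sum_eq_zero fun i hi => hz i (Finset.mem_insert_of_mem hi)
      have hzt : z * t = 0 := by rw [mul_comm]; exact htz
      rw [Finset.card_insert_of_notMem hb, Finset.sum_insert hb]
      have hC : ((s.card + 1).choose 2 : R) = (s.card.choose 2 : R) + s.card := by
        rw [Nat.choose_succ_succ]
        push_cast [Nat.choose_one_right]
        ring
      rw [hC]
      push_cast
      linear_combination (s.card : R) * hbz + hbσ + (s.card.choose 2 : R) * hbt +
        (s.card : R) * hz2 + hzσ + (s.card.choose 2 : R) * hzt

lemma prod_pairs {d : ℕ} {y : Fin d → R} {t : R}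
    (h1 : ∀ i j, i ≠ j → y i * y j = 0)
    (h2 : ∀ i, y i * y i = t)
    (h3 : ∀ i, t * y i = 0)
    (h4 : t * t = 0) :
    ∀ s : Finset (Fin d), s.Nonempty →
      ∏ p ∈ (s ×ˢ s).filter (fun p => p.1 < p.2), (1 + y p.1 + y p.2)
        = (1 + ∑ i ∈ s, y i) ^ (s.card - 1) := by
  classical
  intro s
  induction s using Finset.induction_on_max with
  | empty => intro h; exact absurd h (by simp)
  | insert a s ha ih =>
      intro _
      rcases s.eq_empty_or_nonempty with rfl | hs
      · simp [Finset.filter_singleton]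
      · -- split the pair set
        have hsplit : ((insert a s ×ˢ insert a s).filter (fun p => p.1 < p.2))
            = ((s ×ˢ s).filter (fun p => p.1 < p.2)) ∪ s.image (fun i => (i, a)) := by
          ext ⟨p1, p2⟩
          simp only [Finset.mem_filter, Finset.mem_product, Finset.mem_insert,
            Finset.mem_union, Finset.mem_image, Prod.mk.injEq]
          constructor
          · rintro ⟨⟨h1' | h1', h2' | h2'⟩, hlt⟩
            · exact absurd (h1' ▸ h2' ▸ hlt) (lt_irrefl _)
            · exact absurd (lt_trans hlt (ha p2 h2')) (by rw [h1']; exact lt_irrefl _)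
            · exact Or.inr ⟨p1, h1', rfl, h2'.symm⟩
            · exact Or.inl ⟨⟨h1', h2'⟩, hlt⟩
          · rintro (⟨⟨h1', h2'⟩, hlt⟩ | ⟨i, hi, rfl, rfl⟩)
            · exact ⟨⟨Or.inr h1', Or.inr h2'⟩, hlt⟩
            · exact ⟨⟨Or.inr hi, Or.inl rfl⟩, ha _ hi⟩
        have hdisj : Disjoint ((s ×ˢ s).filter (fun p => p.1 < p.2))
            (s.image (fun i => (i, a))) := by
          rw [Finset.disjoint_left]
          rintro ⟨p1, p2⟩ hp hq
          simp only [Finset.mem_filter, Finset.mem_product] at hp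
          simp only [Finset.mem_image, Prod.mk.injEq] at hq
          obtain ⟨i, hi, rfl, rfl⟩ := hq
          exact absurd hp.1.2 (fun h => (ha a h).false)
        have hanotins : a ∉ s := fun h => (ha a h).false
        rw [hsplit, Finset.prod_union hdisj, ih hs,
          Finset.prod_image (fun i _ j _ h => (Prod.ext_iff.mp h).1)]
        have hprod : ∏ i ∈ s, (1 + y i + y a)
            = 1 + (s.card : R) * y a + (∑ i ∈ s, y i) + (s.card.choose 2 : R) * t :=
          prod_one_add_lin h1 h3 (h2 a) (h3 a) s
            (fun i hi => h1 a i (fun h => hanotins (h ▸ hi)))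
        rw [hprod]
        -- abbreviations
        obtain ⟨n, hn⟩ : ∃ n, s.card = n + 1 :=
          ⟨s.card - 1, (Nat.succ_pred_eq_of_pos (Finset.card_pos.mpr hs)).symm⟩
        set σ : R := ∑ i ∈ s, y i with hσdef
        set z : R := y a with hzdef
        have hzz : z * z = t := h2 a
        have htz : t * z = 0 := h3 a
        have hzσ : z * σ = 0 := by
          rw [hσdef, Finset.mul_sum]
          exact Finset.sum_eq_zero fun i hi => h1 a i (fun h => hanotins (h ▸ hi))
        have htσ : t * σ = 0 := by
          rw [hσdef, Finset.mul_sum]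
          exact Finset.sum_eq_zero fun i _ => h3 i
        have hσσ : σ * σ = (s.card : R) * t := by
          rw [hσdef, Finset.sum_mul_sum]
          rw [Finset.sum_congr rfl (fun i hi => (Finset.sum_eq_single i
            (fun j _ hj => h1 i j (Ne.symm hj)) (fun h => absurd hi h)).trans (h2 i))]
          rw [Finset.sum_const, nsmul_eq_mul]
        have hσ3 : σ * σ * σ = 0 := by
          rw [hσσ, mul_assoc, htσ, mul_zero]
        have hww : (z + σ) * (z + σ) = ((s.card : R) + 1) * t := by
          linear_combination hzz + hσσ + 2 * hzσ
        have hw3 : (z + σ) * (z + σ) * (z + σ) = 0 := by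
          rw [hww]
          linear_combination ((s.card : R) + 1) * htz + ((s.card : R) + 1) * htσ
        rw [Finset.card_insert_of_notMem hanotins, Finset.sum_insert hanotins,
          Nat.add_sub_cancel, pow_one_add_expand σ hσ3,
          pow_one_add_expand (z + σ) hw3]
        rw [hn] at hσσ ⊢
        rw [Nat.add_sub_cancel]
        have hC : ((n + 1).choose 2 : R) = (n.choose 2 : R) + n := by
          rw [Nat.choose_succ_succ]
          push_cast [Nat.choose_one_right]
          ring
        rw [hC]
        push_cast
        push_cast at hσσ
        linear_combination (-(((n.choose 2 : R)) + n)) * hzz +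
          ((n : R) * (n + 1) - 2 * ((n.choose 2 : R) + n) + (n.choose 2 : R) * (n + 1) * σ) * hzσ +
          ((n.choose 2 : R) * σ + (n.choose 2 : R) * ((n.choose 2 : R) + n) * t) * hσσ +
          ((n : R) * ((n.choose 2 : R) + n) + (n.choose 2 : R) * (n + 1)) * htσ +
          ((n.choose 2 : R) * ((n.choose 2 : R) + n) * (n + 1)) * h4

lemma swPoly_matA (d : ℕ) :
    swPoly (matA d) = ∏ p : PairIdx d, (1 + X p.1.1 + X p.1.2) := by
  rw [swPoly, Fintype.prod_sum_type]
  have hleft : ∀ l : Fin (d-1), (1 : MvPolynomial (Fin d) (ZMod 2))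
      + alphaP (matA d) (Sum.inl l) + betaP (matA d) (Sum.inl l) = 1 := by
    intro l
    have hab : alphaP (matA d) (Sum.inl l) = betaP (matA d) (Sum.inl l) := by
      unfold alphaP betaP
      refine Finset.sum_congr rfl fun i _ => ?_
      rw [matA, Matrix.fromCols_apply_inl, matA0]
      congr 1
      congr 1
      split <;> rfl
    rw [← hab, add_assoc, CharTwo.add_self_eq_zero, add_zero]
  have hα : ∀ p : PairIdx d, alphaP (matA d) (Sum.inr p) = X p.1.1 := by
    intro p
    unfold alphaP
    have key : ∀ i : Fin d, C (Sα (matA d i (Sum.inr p)))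
        * (X i : MvPolynomial (Fin d) (ZMod 2)) = if i = p.1.1 then X i else 0 := by
      intro i
      rw [matA, Matrix.fromCols_apply_inr, matA1]
      by_cases h1 : i = p.1.1
      · rw [if_pos h1, if_pos h1]
        show C (Sα s2) * X i = X i
        rw [show Sα s2 = 1 from rfl, map_one, one_mul]
      · rw [if_neg h1, if_neg h1]
        by_cases h2 : i = p.1.2
        · rw [if_pos h2]
          show C (Sα s3) * X i = 0
          rw [show Sα s3 = 0 from rfl, map_zero, zero_mul]
        · rw [if_neg h2]
          show C (Sα s0) * X i = 0
          rw [show Sα s0 = 0 from rfl, map_zero, zero_mul]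
    rw [Finset.sum_congr rfl fun i _ => key i, Finset.sum_ite_eq' Finset.univ p.1.1 X,
      if_pos (Finset.mem_univ _)]
  have hβ : ∀ p : PairIdx d, betaP (matA d) (Sum.inr p) = X p.1.2 := by
    intro p
    unfold betaP
    have key : ∀ i : Fin d, C (Sβ (matA d i (Sum.inr p)))
        * (X i : MvPolynomial (Fin d) (ZMod 2)) = if i = p.1.2 then X i else 0 := by
      intro i
      rw [matA, Matrix.fromCols_apply_inr, matA1]
      by_cases h1 : i = p.1.1
      · have h2 : i ≠ p.1.2 := fun h => absurd (h ▸ h1 ▸ p.2) (lt_irrefl _)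
        rw [if_pos h1, if_neg h2]
        show C (Sβ s2) * X i = 0
        rw [show Sβ s2 = 0 from rfl, map_zero, zero_mul]
      · rw [if_neg h1]
        by_cases h2 : i = p.1.2
        · rw [if_pos h2, if_pos h2]
          show C (Sβ s3) * X i = X i
          rw [show Sβ s3 = 1 from rfl, map_one, one_mul]
        · rw [if_neg h2, if_neg h2]
          show C (Sβ s0) * X i = 0
          rw [show Sβ s0 = 0 from rfl, map_zero, zero_mul]
    rw [Finset.sum_congr rfl fun i _ => key i, Finset.sum_ite_eq' Finset.univ p.1.2 X,
      if_pos (Finset.mem_univ _)]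
  rw [Finset.prod_congr rfl fun l _ => hleft l, Finset.prod_const_one, one_mul]
  exact Finset.prod_congr rfl fun p _ => by rw [hα p, hβ p]

/-- for `d ≥ 2`, `w(A) - (1 + σ₁)^(d-1) ∈ J`, where `σ₁ = x₁ + … + x_d`. -/
theorem sw_matA (d : ℕ) (hd : 2 ≤ d) :
    swPoly (matA d) - (1 + ∑ i : Fin d, X i) ^ (d - 1) ∈ Jideal d := by
  rw [swPoly_matA d]
  have h0d : 0 < d := by omega
  haveI : NeZero d := ⟨by omega⟩
  rw [← Ideal.Quotient.eq]
  set π := Ideal.Quotient.mk (Jideal d) with hπ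
  set y : Fin d → MvPolynomial (Fin d) (ZMod 2) ⧸ Jideal d := fun i => π (X i) with hy
  have h1 : ∀ i j : Fin d, i ≠ j → y i * y j = 0 := by
    intro i j hij
    rw [hy, ← map_mul, Ideal.Quotient.eq_zero_iff_mem]
    exact Ideal.subset_span (Or.inr ⟨i, j, hij, rfl⟩)
  have hsq : ∀ i j : Fin d, y i * y i = y j * y j := by
    intro i j
    by_cases hij : i = j
    · rw [hij]
    · rw [hy, ← map_mul, ← map_mul, Ideal.Quotient.eq]
      have : (X i * X i - X j * X j : MvPolynomial (Fin d) (ZMod 2))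
          = X i ^ 2 + X j ^ 2 := by
        rw [CharTwo.sub_eq_add]; ring
      rw [this]
      exact Ideal.subset_span (Or.inl ⟨i, j, hij, rfl⟩)
  set i0 : Fin d := ⟨0, h0d⟩ with hi0
  set t := y i0 * y i0 with ht
  have h2 : ∀ i, y i * y i = t := fun i => hsq i i0
  have h3 : ∀ i, t * y i = 0 := by
    intro i
    set j : Fin d := if i = i0 then ⟨1, by omega⟩ else i0 with hj
    have hji : j ≠ i := by
      rw [hj]; split
      · rename_i h; rw [h]; intro hc; exact absurd (congrArg Fin.val hc) (by simp [hi0])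
      · rename_i h; exact fun hc => h hc.symm
    rw [ht, hsq i0 j, mul_assoc, h1 j i hji, mul_zero]
  have h4 : t * t = 0 := by
    calc t * t = t * y i0 * y i0 := by rw [ht]; ring
      _ = 0 := by rw [h3, zero_mul]
  have key := prod_pairs h1 h2 h3 h4 Finset.univ Finset.univ_nonempty
  rw [Finset.card_univ, Fintype.card_fin] at key
  simp only [map_prod, map_pow, map_add, map_one, map_sum]
  exact ((Finset.prod_subtype ((Finset.univ ×ˢ Finset.univ).filter
      (fun p : Fin d × Fin d => p.1 < p.2)) (fun p => by simp)
      (fun p : Fin d × Fin d => 1 + y p.1 + y p.2)).symm).trans key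
end Core
end

section
/- Let d ≥ 2 and let A = [A_0, A_1] ∈ S^{d×(d−1+d(d−1)/2)}. Then A is free: for every nonzero x ∈ F_2^d there exists a column index j such that the sum in the group S of the entries A_{ij} over all rows i with x_i = 1 equals 1. -/
open MvPolynomial

lemma colSum_fst {d : ℕ} {ι : Type*} (A : Matrix (Fin d) ι S4) (x : Fin d → ZMod 2) (j : ι) :
    (colSum A x j).1 = ∑ i, x i * (A i j).1 := by
  unfold colSum
  rw [Prod.fst_sum]
  refine Finset.sum_congr rfl fun i _ => ?_
  rw [Prod.smul_fst, nsmul_eq_mul, ZMod.natCast_val, ZMod.cast_id]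

lemma colSum_snd {d : ℕ} {ι : Type*} (A : Matrix (Fin d) ι S4) (x : Fin d → ZMod 2) (j : ι) :
    (colSum A x j).2 = ∑ i, x i * (A i j).2 := by
  unfold colSum
  rw [Prod.snd_sum]
  refine Finset.sum_congr rfl fun i _ => ?_
  rw [Prod.smul_snd, nsmul_eq_mul, ZMod.natCast_val, ZMod.cast_id]

/-- for `d ≥ 2`, the matrix `A = [A₀, A₁]` is free: for every nonzero
`x ∈ F₂^d` some column sum over the support of `x` equals `1`. -/
theorem matA_free (d : ℕ) (hd : 2 ≤ d) :
    ∀ x : Fin d → ZMod 2, x ≠ 0 → ∃ j, colSum (matA d) x j = s1 := by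
  intro x hx
  have hd1 : d - 1 < d := by omega
  set b : Fin d := ⟨d - 1, hd1⟩ with hb
  by_cases h : ∃ l : Fin d, l.val < d - 1 ∧ x l ≠ x b
  · obtain ⟨l, hl, hne⟩ := h
    refine ⟨Sum.inl ⟨l.val, hl⟩, ?_⟩
    have hsum : ∀ f : S4 → ZMod 2, f s0 = 0 → f s1 = 1 →
        (∑ i, x i * f (matA d i (Sum.inl ⟨l.val, hl⟩))) = x l + x b := by
      intro f h0 h1
      have : ∀ i : Fin d, x i * f (matA d i (Sum.inl ⟨l.val, hl⟩)) =
          (if i = l then x i else 0) + (if i = b then x i else 0) := by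
        intro i
        show x i * f (matA0 d i ⟨l.val, hl⟩) = _
        unfold matA0
        by_cases h1' : i = l <;> by_cases h2' : i = b <;>
          simp_all [Fin.ext_iff] <;> omega
      rw [Finset.sum_congr rfl fun i _ => this i, Finset.sum_add_distrib,
        Finset.sum_ite_eq' Finset.univ l, Finset.sum_ite_eq' Finset.univ b]
      simp
    have hne1 : x l + x b = 1 :=
      (by decide : ∀ a c : ZMod 2, a ≠ c → a + c = 1) _ _ hne
    apply Prod.ext
    · rw [colSum_fst, hsum (fun s => s.1) rfl rfl, hne1]; rfl
    · rw [colSum_snd, hsum (fun s => s.2) rfl rfl, hne1]; rfl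
  · push_neg at h
    have hall : ∀ i : Fin d, x i = x b := by
      intro i
      rcases Nat.lt_or_ge i.val (d - 1) with hi | hi
      · exact h i hi
      · have : i = b := Fin.ext (show i.val = d - 1 by omega)
        rw [this]
    have hxb : x b = 1 := by
      by_contra hxb
      have : x b = 0 := (by decide : ∀ a : ZMod 2, a ≠ 1 → a = 0) _ hxb
      exact hx (funext fun i => by rw [hall i, this]; rfl)
    have h0 : (0 : ℕ) < d := by omega
    have h1 : (1 : ℕ) < d := by omega
    set i0 : Fin d := ⟨0, h0⟩
    set i1 : Fin d := ⟨1, h1⟩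
    refine ⟨Sum.inr ⟨(i0, i1), by simp [i0, i1, Fin.lt_def]⟩, ?_⟩
    have key : ∀ f : S4 → ZMod 2, ∀ i : Fin d,
        x i * f (matA d i (Sum.inr ⟨(i0, i1), by simp [i0, i1, Fin.lt_def]⟩)) =
        x i * f (matA1 d i ⟨(i0, i1), by simp [i0, i1, Fin.lt_def]⟩) := fun _ _ => rfl
    apply Prod.ext
    · rw [colSum_fst]
      have : ∀ i : Fin d, x i * (matA d i (Sum.inr (⟨(i0, i1), by simp [i0, i1, Fin.lt_def]⟩ : PairIdx d))).1
          = if i = i0 then x i else 0 := by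
        intro i
        show x i * (matA1 d i (⟨(i0, i1), by simp [i0, i1, Fin.lt_def]⟩ : PairIdx d)).1 = _
        unfold matA1
        by_cases hi : i = i0 <;> by_cases hi' : i = i1 <;> simp_all [s2, s3, s0, i0, i1, Fin.ext_iff]
      rw [Finset.sum_congr rfl fun i _ => this i, Finset.sum_ite_eq' Finset.univ i0]
      simp [hall i0, hxb, s1]
    · rw [colSum_snd]
      have : ∀ i : Fin d, x i * (matA d i (Sum.inr (⟨(i0, i1), by simp [i0, i1, Fin.lt_def]⟩ : PairIdx d))).2
          = if i = i1 then x i else 0 := by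
        intro i
        show x i * (matA1 d i (⟨(i0, i1), by simp [i0, i1, Fin.lt_def]⟩ : PairIdx d)).2 = _
        unfold matA1
        by_cases hi : i = i0 <;> by_cases hi' : i = i1 <;> simp_all [s2, s3, s0, i0, i1, Fin.ext_iff]
      rw [Finset.sum_congr rfl fun i _ => this i, Finset.sum_ite_eq' Finset.univ i1]
      simp [hall i1, hxb, s1]
end

section
/- Let d ≥ 2 and let p ∈ F_2[x_1,…,x_d] be a homogeneous polynomial of degree 2. Then p ∈ J if and only if Σ_{i=1}^d c_i = 0 in F_2, where c_i is the coefficient of x_i² in p. (Equivalently, the degree-2 part of J is the kernel of the linear map φ on homogeneous quadratics determined by φ(x_i²) = 1 and φ(x_i x_j) = 0 for i ≠ j.) -/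
open MvPolynomial

lemma single_sub_single {d : ℕ} (i : Fin d) :
    Finsupp.single i 2 - Finsupp.single i (1:ℕ) = Finsupp.single i 1 := by
  ext k; simp [Finsupp.single_apply]; split <;> omega

lemma classify_deg2 {d : ℕ} (m : Fin d →₀ ℕ) (hm : m.degree = 2)
    (hns : ∀ i, m ≠ Finsupp.single i 2) :
    ∃ i j, i ≠ j ∧ m = Finsupp.single i 1 + Finsupp.single j 1 := by
  have hsum : ∑ k ∈ m.support, m k = 2 := hm
  have h1 : ∀ k ∈ m.support, 1 ≤ m k := fun k hk =>
    Nat.one_le_iff_ne_zero.mpr (Finsupp.mem_support_iff.mp hk)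
  have hcard : m.support.card ≤ 2 := by
    have := Finset.card_nsmul_le_sum m.support m 1 h1
    simpa [hsum] using this
  have hne : m.support.Nonempty := by
    rw [Finset.nonempty_iff_ne_empty]
    intro h
    rw [h] at hsum; simp at hsum
  interval_cases hc : m.support.card
  · exact absurd (Finset.card_eq_zero.mp hc) (Finset.nonempty_iff_ne_empty.mp hne)
  · obtain ⟨i, hi⟩ := Finset.card_eq_one.mp hc
    obtain ⟨-, hfi⟩ := Finsupp.support_eq_singleton.mp hi
    have : m i = 2 := by rw [hi] at hsum; simpa using hsum
    rw [this] at hfi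
    exact absurd hfi (hns i)
  · obtain ⟨i, j, hij, hs⟩ := Finset.card_eq_two.mp hc
    have hmi : m i + m j = 2 := by
      rw [hs] at hsum; rwa [Finset.sum_insert (by simp [hij]), Finset.sum_singleton] at hsum
    have h1i : 1 ≤ m i := h1 i (by rw [hs]; simp)
    have h1j : 1 ≤ m j := h1 j (by rw [hs]; simp)
    refine ⟨i, j, hij, ?_⟩
    ext k
    by_cases hki : k = i
    · subst hki; simp [Finsupp.single_apply, hij, Ne.symm hij]; omega
    · by_cases hkj : k = j
      · subst hkj; simp [Finsupp.single_apply, hij, Ne.symm hij]; omega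
      · have : k ∉ m.support := by rw [hs]; simp [hki, hkj]
        simp [Finsupp.notMem_support_iff.mp this, Finsupp.single_apply,
          Ne.symm hki, Ne.symm hkj]

lemma Lmul_sq {d : ℕ} (r : MvPolynomial (Fin d) (ZMod 2)) (i : Fin d) :
    ∑ k : Fin d, (r * (X i * X i)).coeff (Finsupp.single k 2) = r.coeff 0 := by
  have h : ∀ k : Fin d, (r * (X i * X i)).coeff (Finsupp.single k 2)
      = if k = i then r.coeff 0 else 0 := by
    intro k
    rw [← mul_assoc, coeff_mul_X']
    by_cases hk : k = i
    · subst hk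
      simp only [Finsupp.mem_support_iff, Finsupp.single_eq_same, if_pos,
        single_sub_single, coeff_mul_X']
      simp
    · rw [if_neg, if_neg hk]
      simp only [Finsupp.mem_support_iff, Finsupp.single_apply, if_neg (Ne.symm hk)]
      simp
      exact hk
  simp [h]

lemma Lmul_cross {d : ℕ} (r : MvPolynomial (Fin d) (ZMod 2)) {i j : Fin d} (hij : i ≠ j)
    (k : Fin d) : (r * (X i * X j)).coeff (Finsupp.single k 2) = 0 := by
  rw [← mul_assoc, coeff_mul_X']
  by_cases hk : k = j
  · subst hk
    simp only [Finsupp.mem_support_iff, Finsupp.single_eq_same, if_pos,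
      single_sub_single, coeff_mul_X']
    simp [Finsupp.single_apply, hij]
  · rw [if_neg]
    simp only [Finsupp.mem_support_iff, Finsupp.single_apply, if_neg (Ne.symm hk)]
    simp
    exact hk

lemma mem_J_of_no_squares {d : ℕ} (q : MvPolynomial (Fin d) (ZMod 2))
    (hq : q.IsHomogeneous 2) (h0 : ∀ k, q.coeff (Finsupp.single k 2) = 0) :
    q ∈ Jideal d := by
  rw [← q.support_sum_monomial_coeff]
  apply Ideal.sum_mem
  intro m hm
  have hc : q.coeff m ≠ 0 := mem_support_iff.mp hm
  have hdeg : m.degree = 2 := by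
    rw [Finsupp.degree_eq_weight_one]; exact hq hc
  have hns : ∀ i, m ≠ Finsupp.single i 2 := by
    rintro i rfl; exact hc (h0 i)
  obtain ⟨i, j, hij, rfl⟩ := classify_deg2 m hdeg hns
  have heq : (monomial (Finsupp.single i 1 + Finsupp.single j 1))
      (q.coeff (Finsupp.single i 1 + Finsupp.single j 1))
      = C (q.coeff (Finsupp.single i 1 + Finsupp.single j 1)) * (X i * X j) := by
    rw [X, X, monomial_mul, C_mul_monomial]
    simp
  rw [heq]
  exact Ideal.mul_mem_left _ _ (Ideal.subset_span (Or.inr ⟨i, j, hij, rfl⟩))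

/-- a homogeneous quadratic `p` lies in `J` iff the sum of the coefficients
of the `x_i²` in `p` vanishes. -/
theorem quadratic_mem_J_iff (d : ℕ) (hd : 2 ≤ d) (p : MvPolynomial (Fin d) (ZMod 2))
    (hp : p.IsHomogeneous 2) :
    p ∈ Jideal d ↔ ∑ i : Fin d, p.coeff (Finsupp.single i 2) = 0 := by
  constructor
  · intro hmem
    have key : ∀ (x : MvPolynomial (Fin d) (ZMod 2)) (_ : x ∈ Jideal d)
        (r : MvPolynomial (Fin d) (ZMod 2)),
        ∑ k : Fin d, (r * x).coeff (Finsupp.single k 2) = 0 := by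
      intro x hx
      refine Submodule.span_induction ?_ ?_ ?_ ?_ hx
      · rintro g (⟨i, j, hij, rfl⟩ | ⟨i, j, hij, rfl⟩) r
        · simp only [mul_add, coeff_add, Finset.sum_add_distrib, pow_two]
          rw [Lmul_sq, Lmul_sq]
          exact CharTwo.add_self_eq_zero _
        · simp [Lmul_cross r hij]
      · intro r; simp
      · intro a b _ _ ha hb r
        simp [mul_add, Finset.sum_add_distrib, ha r, hb r]
      · intro s a _ ih r
        rw [smul_eq_mul, ← mul_assoc]
        exact ih (r * s)
    have := key p hmem 1
    simpa using this
  · intro hsum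
    have h2 : 0 < d := by omega
    set z : Fin d := ⟨0, h2⟩ with hz
    set c : Fin d → ZMod 2 := fun i => p.coeff (Finsupp.single i 2) with hcdef
    set g : MvPolynomial (Fin d) (ZMod 2) :=
      ∑ i ∈ Finset.univ.erase z, C (c i) * (X i ^ 2 + X z ^ 2) with hgdef
    have hgJ : g ∈ Jideal d := by
      apply Ideal.sum_mem
      intro i hi
      exact Ideal.mul_mem_left _ _ (Ideal.subset_span
        (Or.inl ⟨i, z, (Finset.mem_erase.mp hi).1, rfl⟩))
    have hgcoeff : ∀ k, g.coeff (Finsupp.single k 2)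
        = if k = z then ∑ i ∈ Finset.univ.erase z, c i else c k := by
      intro k
      rw [hgdef]
      rw [coeff_sum]
      have hterm : ∀ i ∈ Finset.univ.erase z,
          (C (c i) * (X i ^ 2 + X z ^ 2)).coeff (Finsupp.single k 2)
          = (if i = k then c i else 0) + (if z = k then c i else 0) := by
        intro i hi
        rw [mul_add, coeff_add, coeff_C_mul, coeff_C_mul, coeff_X_pow, coeff_X_pow]
        have hsing : ∀ a b : Fin d, (Finsupp.single a 2 = Finsupp.single b 2) ↔ a = b :=
          fun a b => Finsupp.single_left_inj (by norm_num)
        simp only [hsing]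
        split <;> split <;> simp [mul_add]
      rw [Finset.sum_congr rfl hterm, Finset.sum_add_distrib]
      by_cases hk : k = z
      · subst hk
        rw [Finset.sum_ite_eq' , Finset.sum_congr rfl (fun i _ => if_pos rfl)]
        simp
      · rw [Finset.sum_ite_eq', Finset.sum_congr rfl
          (fun i _ => if_neg (fun h => hk h.symm))]
        simp [Finset.mem_erase, hk, Ne.symm hk]
    have hsumz : ∑ i ∈ Finset.univ.erase z, c i = c z := by
      have : ∑ i : Fin d, c i = 0 := hsum
      have h := Finset.add_sum_erase Finset.univ c (Finset.mem_univ z)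
      rw [this] at h
      have := CharTwo.add_self_eq_zero (R := ZMod 2)
      linear_combination h - CharTwo.add_self_eq_zero (c z)
    have hpq : (p + g).coeff = fun m => p.coeff m + g.coeff m := by
      funext m; simp
    have hpg0 : ∀ k, (p + g).coeff (Finsupp.single k 2) = 0 := by
      intro k
      rw [coeff_add, hgcoeff]
      by_cases hk : k = z
      · subst hk; rw [if_pos rfl, hsumz]; exact CharTwo.add_self_eq_zero _
      · rw [if_neg hk]; exact CharTwo.add_self_eq_zero _
    have hpgh : (p + g).IsHomogeneous 2 := by
      apply hp.add
      apply IsHomogeneous.sum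
      intro i _
      have h1 : (C (c i) : MvPolynomial (Fin d) (ZMod 2)).IsHomogeneous 0 :=
        isHomogeneous_C _ _
      have h2 : ((X i ^ 2 : MvPolynomial (Fin d) (ZMod 2))).IsHomogeneous 2 := by
        simpa using (isHomogeneous_X (ZMod 2) i).pow 2
      have h3 : ((X z ^ 2 : MvPolynomial (Fin d) (ZMod 2))).IsHomogeneous 2 := by
        simpa using (isHomogeneous_X (ZMod 2) z).pow 2
      simpa using h1.mul (h2.add h3)
    have hmem : p + g ∈ Jideal d := mem_J_of_no_squares _ hpgh hpg0
    have : p = (p + g) + g := by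
      rw [add_assoc, CharTwo.add_self_eq_zero, add_zero]
    rw [this]
    exact Ideal.add_mem _ hmem hgJ
end

section
/- Let d ≥ 2. Then the characteristic ideal of the matrix E equals J, i.e., I_E = J, where E = [A,B,C,C] if d ≡ 0 mod 2, E = [A,B,B] if d ≡ 1 mod 4, and E = A if d ≡ 3 mod 4. -/
open MvPolynomial

section Aux

/-- `thetaP` on the left block of `fromColumns`. -/
lemma thetaP_fromColumns_inl {d : ℕ} {ι₁ ι₂ : Type*} (M : Matrix (Fin d) ι₁ S4)
    (N : Matrix (Fin d) ι₂ S4) (j : ι₁) :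
    thetaP (Matrix.fromCols M N) (Sum.inl j) = thetaP M j := by
  simp [thetaP, alphaP, betaP, Matrix.fromCols]

lemma thetaP_fromColumns_inr {d : ℕ} {ι₁ ι₂ : Type*} (M : Matrix (Fin d) ι₁ S4)
    (N : Matrix (Fin d) ι₂ S4) (j : ι₂) :
    thetaP (Matrix.fromCols M N) (Sum.inr j) = thetaP N j := by
  simp [thetaP, alphaP, betaP, Matrix.fromCols]

lemma charIdeal_fromColumns {d : ℕ} {ι₁ ι₂ : Type*} (M : Matrix (Fin d) ι₁ S4)
    (N : Matrix (Fin d) ι₂ S4) :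
    charIdeal (Matrix.fromCols M N) = charIdeal M ⊔ charIdeal N := by
  unfold charIdeal
  rw [← Ideal.span_union]
  congr 1
  ext q
  simp only [Set.mem_range, Set.mem_union]
  constructor
  · rintro ⟨(j | j), rfl⟩
    · exact Or.inl ⟨j, (thetaP_fromColumns_inl M N j).symm⟩
    · exact Or.inr ⟨j, (thetaP_fromColumns_inr M N j).symm⟩
  · rintro (⟨j, rfl⟩ | ⟨j, rfl⟩)
    · exact ⟨Sum.inl j, thetaP_fromColumns_inl M N j⟩
    · exact ⟨Sum.inr j, thetaP_fromColumns_inr M N j⟩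

lemma charIdeal_matB (d : ℕ) : charIdeal (matB d) = ⊥ := by
  rw [charIdeal, Ideal.span_eq_bot]
  rintro _ ⟨j, rfl⟩
  simp [thetaP, betaP, matB, Sβ, s2]

lemma charIdeal_matC (d : ℕ) : charIdeal (matC d) = ⊥ := by
  rw [charIdeal, Ideal.span_eq_bot]
  rintro _ ⟨j, rfl⟩
  simp [thetaP, betaP, matC, Sβ, s2, s0, apply_ite]

open MvPolynomial in
lemma alphaP_matA_inl {d : ℕ} (hd : 2 ≤ d) (l : Fin (d - 1)) :
    alphaP (matA d) (Sum.inl l) =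
      X (Fin.castLE (Nat.sub_le d 1) l) + X (⟨d - 1, by omega⟩ : Fin d) := by
  set L : Fin d := Fin.castLE (Nat.sub_le d 1) l with hL
  set D : Fin d := ⟨d - 1, by omega⟩ with hD
  have hl : l.val < d - 1 := l.isLt
  have hLD : L ≠ D := by simp [hL, hD, Fin.ext_iff]; omega
  have key : ∀ i : Fin d, C (Sα (matA d i (Sum.inl l))) * X i
      = (if i = L then X L else 0) + (if i = D then X D else 0) := by
    intro i
    rw [matA, Matrix.fromCols_apply_inl, matA0]
    by_cases h1 : i = L <;> by_cases h2 : i = D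
    · exact absurd (h1 ▸ h2) hLD
    · subst h1
      have : L.val = l.val ∨ L.val = d - 1 := Or.inl rfl
      simp [this, h2, Sα, s1]
    · subst h2
      have : D.val = l.val ∨ D.val = d - 1 := Or.inr rfl
      simp [this, hLD.symm, Sα, s1]
    · have : ¬(i.val = l.val ∨ i.val = d - 1) := by
        simp only [hL, hD, Fin.ext_iff, Fin.coe_castLE] at h1 h2
        omega
      simp [this, h1, h2, Sα, s0]
  calc alphaP (matA d) (Sum.inl l)
      = ∑ i, ((if i = L then X L else 0) + (if i = D then X D else 0)) :=
        Finset.sum_congr rfl fun i _ => key i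
    _ = X L + X D := by
        rw [Finset.sum_add_distrib, Finset.sum_ite_eq', Finset.sum_ite_eq']
        simp

open MvPolynomial in
lemma betaP_matA_inl {d : ℕ} (hd : 2 ≤ d) (l : Fin (d - 1)) :
    betaP (matA d) (Sum.inl l) =
      X (Fin.castLE (Nat.sub_le d 1) l) + X (⟨d - 1, by omega⟩ : Fin d) := by
  have : betaP (matA d) (Sum.inl l) = alphaP (matA d) (Sum.inl l) := by
    unfold betaP alphaP
    refine Finset.sum_congr rfl fun i _ => ?_
    rw [matA, Matrix.fromCols_apply_inl, matA0]
    split_ifs <;> rfl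
  rw [this, alphaP_matA_inl hd l]

open MvPolynomial in
lemma thetaP_matA_inl {d : ℕ} (hd : 2 ≤ d) (l : Fin (d - 1)) :
    thetaP (matA d) (Sum.inl l) =
      X (Fin.castLE (Nat.sub_le d 1) l) ^ 2 + X (⟨d - 1, by omega⟩ : Fin d) ^ 2 := by
  rw [thetaP, alphaP_matA_inl hd l, betaP_matA_inl hd l, ← sq, CharTwo.add_sq]

open MvPolynomial in
lemma alphaP_matA_inr {d : ℕ} (p : PairIdx d) :
    alphaP (matA d) (Sum.inr p) = X p.1.1 := by
  have key : ∀ i : Fin d, C (Sα (matA d i (Sum.inr p))) * X i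
      = if i = p.1.1 then X p.1.1 else 0 := by
    intro i
    rw [matA, Matrix.fromCols_apply_inr, matA1]
    by_cases h1 : i = p.1.1
    · simp [h1, Sα, s2]
    · by_cases h2 : i = p.1.2 <;>
        simp [h1, h2, (ne_of_lt p.2).symm, Sα, s3, s0]
  rw [alphaP, Finset.sum_congr rfl fun i _ => key i, Finset.sum_ite_eq']
  simp

open MvPolynomial in
lemma betaP_matA_inr {d : ℕ} (p : PairIdx d) :
    betaP (matA d) (Sum.inr p) = X p.1.2 := by
  have hne : p.1.2 ≠ p.1.1 := (ne_of_lt p.2).symm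
  have key : ∀ i : Fin d, C (Sβ (matA d i (Sum.inr p))) * X i
      = if i = p.1.2 then X p.1.2 else 0 := by
    intro i
    rw [matA, Matrix.fromCols_apply_inr, matA1]
    by_cases h1 : i = p.1.1
    · subst h1; simp [hne.symm, Sβ, s2]
    · by_cases h2 : i = p.1.2 <;>
        simp [h1, h2, (ne_of_lt p.2).symm, Sβ, s3, s0]
  rw [betaP, Finset.sum_congr rfl fun i _ => key i, Finset.sum_ite_eq']
  simp

open MvPolynomial in
lemma thetaP_matA_inr {d : ℕ} (p : PairIdx d) :
    thetaP (matA d) (Sum.inr p) = X p.1.1 * X p.1.2 := by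
  rw [thetaP, alphaP_matA_inr, betaP_matA_inr]

open MvPolynomial in
lemma charIdeal_matA_eq (d : ℕ) (hd : 2 ≤ d) : charIdeal (matA d) = Jideal d := by
  set D : Fin d := ⟨d - 1, by omega⟩ with hD
  apply le_antisymm
  · rw [charIdeal, Ideal.span_le]
    rintro _ ⟨(l | p), rfl⟩
    · rw [thetaP_matA_inl hd l]
      apply Ideal.subset_span
      left
      refine ⟨_, _, ?_, rfl⟩
      simp [Fin.ext_iff]
      have := l.isLt
      omega
    · rw [thetaP_matA_inr p]
      apply Ideal.subset_span
      right
      exact ⟨_, _, ne_of_lt p.2, rfl⟩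
  · have hprod : ∀ i j : Fin d, i < j → X i * X j ∈ charIdeal (matA d) := by
      intro i j hij
      exact Ideal.subset_span ⟨Sum.inr ⟨(i, j), hij⟩, thetaP_matA_inr _⟩
    have hsq : ∀ i : Fin d, i ≠ D → X i ^ 2 + X D ^ 2 ∈ charIdeal (matA d) := by
      intro i hi
      have hi2 : i.val ≠ d - 1 := fun h => hi (by simp [hD, Fin.ext_iff, h])
      have hi' : i.val < d - 1 := by have := i.isLt; omega
      have hmem : thetaP (matA d) (Sum.inl (⟨i.val, hi'⟩ : Fin (d - 1))) ∈
          charIdeal (matA d) := Ideal.subset_span ⟨_, rfl⟩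
      rw [thetaP_matA_inl hd] at hmem
      have hc : Fin.castLE (Nat.sub_le d 1) (⟨i.val, hi'⟩ : Fin (d - 1)) = i := by
        simp [Fin.ext_iff]
      rwa [hc] at hmem
    rw [Jideal, Ideal.span_le]
    rintro q (⟨i, j, hij, rfl⟩ | ⟨i, j, hij, rfl⟩)
    · by_cases hjD : j = D
      · subst hjD
        exact hsq i hij
      · by_cases hiD : i = D
        · subst hiD
          rw [add_comm]
          exact hsq j hjD
        · have : (X i ^ 2 + X j ^ 2 : MvPolynomial (Fin d) (ZMod 2)) =
              (X i ^ 2 + X D ^ 2) + (X j ^ 2 + X D ^ 2) := by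
            have h : (X D ^ 2 + X D ^ 2 : MvPolynomial (Fin d) (ZMod 2)) = 0 :=
              CharTwo.add_self_eq_zero _
            linear_combination -h
          rw [this]
          exact Ideal.add_mem _ (hsq i hiD) (hsq j hjD)
    · rcases lt_or_gt_of_ne hij with h | h
      · exact hprod i j h
      · rw [mul_comm]
        exact hprod j i h

end Aux

/-- for `d ≥ 2`, the characteristic ideal of the matrix `E` equals `J`,
where `E = [A,B,C,C]` if `d ≡ 0 mod 2`, `E = [A,B,B]` if `d ≡ 1 mod 4`,
and `E = A` if `d ≡ 3 mod 4`. -/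
theorem charIdeal_matE (d : ℕ) (hd : 2 ≤ d) :
    (d % 2 = 0 → charIdeal (matE0 d) = Jideal d) ∧
    (d % 4 = 1 → charIdeal (matE1 d) = Jideal d) ∧
    (d % 4 = 3 → charIdeal (matA d) = Jideal d) := by
  have hA := charIdeal_matA_eq d hd
  refine ⟨fun _ => ?_, fun _ => ?_, fun _ => hA⟩
  · rw [matE0, charIdeal_fromColumns, charIdeal_fromColumns, charIdeal_fromColumns,
      charIdeal_matB, charIdeal_matC, hA]
    simp
  · rw [matE1, charIdeal_fromColumns, charIdeal_fromColumns, charIdeal_matB, hA]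
    simp
end

section
/- Let d ≥ 2. Then x_1² ∉ J, and for every homogeneous polynomial p ∈ F_2[x_1,…,x_d] of degree 2, either p ∈ J or p − x_1² ∈ J. (Hence the degree-2 graded piece of F_2[x_1,…,x_d]/J is one-dimensional, spanned by the class of x_1².) -/
open MvPolynomial

/-- The linear functional summing coefficients of the squares `x_i²`. -/
noncomputable def Lsq (d : ℕ) : MvPolynomial (Fin d) (ZMod 2) →ₗ[ZMod 2] ZMod 2 :=
  ∑ i : Fin d, lcoeff (ZMod 2) (Finsupp.single i 2)

lemma Lsq_apply {d : ℕ} (p : MvPolynomial (Fin d) (ZMod 2)) :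
    Lsq d p = ∑ i : Fin d, coeff (Finsupp.single i 2) p := by
  simp [Lsq, lcoeff]

lemma coeff_single_two_mul_sq {d : ℕ} (q : MvPolynomial (Fin d) (ZMod 2)) (i k : Fin d) :
    coeff (Finsupp.single k 2) (q * (X i * X i)) =
      if k = i then constantCoeff q else 0 := by
  rw [← mul_assoc, coeff_mul_X']
  by_cases h : k = i
  · subst h
    have h1 : (Finsupp.single k 2 - Finsupp.single k 1) = Finsupp.single k 1 := by
      ext a; by_cases ha : k = a <;> simp [Finsupp.single_apply, ha]
    simp [h1, coeff_mul_X']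
    rfl
  · have : i ∉ (Finsupp.single k 2 : Fin d →₀ ℕ).support := by
      simp [Finsupp.support_single_ne_zero, Ne.symm h]
    simp [this, h, Ne.symm h]

lemma coeff_single_two_mul_XX {d : ℕ} (q : MvPolynomial (Fin d) (ZMod 2)) (i j k : Fin d)
    (hij : i ≠ j) : coeff (Finsupp.single k 2) (q * (X i * X j)) = 0 := by
  rw [← mul_assoc, coeff_mul_X']
  by_cases h : j ∈ (Finsupp.single k 2 : Fin d →₀ ℕ).support
  · have hk : j = k := by simpa [Finsupp.support_single_ne_zero] using h
    subst hk
    have h1 : (Finsupp.single j 2 - Finsupp.single j 1) = Finsupp.single j 1 := by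
      ext a; by_cases ha : j = a <;> simp [Finsupp.single_apply, ha]
    rw [if_pos h, h1, coeff_mul_X']
    have : i ∉ (Finsupp.single j 1 : Fin d →₀ ℕ).support := by
      simp [Finsupp.support_single_ne_zero, hij]
    simp [this, hij]
  · rw [if_neg h]

lemma Lsq_gen {d : ℕ} (q g : MvPolynomial (Fin d) (ZMod 2))
    (hg : g ∈ ({q | ∃ i j : Fin d, i ≠ j ∧ q = X i ^ 2 + X j ^ 2} ∪
        {q | ∃ i j : Fin d, i ≠ j ∧ q = X i * X j} :
        Set (MvPolynomial (Fin d) (ZMod 2)))) :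
    Lsq d (q * g) = 0 := by
  rw [Lsq_apply]
  rcases hg with ⟨i, j, hij, rfl⟩ | ⟨i, j, hij, rfl⟩
  · have : ∀ k : Fin d, coeff (Finsupp.single k 2) (q * (X i ^ 2 + X j ^ 2)) =
        (if k = i then constantCoeff q else 0) + (if k = j then constantCoeff q else 0) := by
      intro k
      rw [mul_add, coeff_add, show (X i : MvPolynomial (Fin d) (ZMod 2)) ^ 2 = X i * X i by ring,
        show (X j : MvPolynomial (Fin d) (ZMod 2)) ^ 2 = X j * X j by ring,
        coeff_single_two_mul_sq, coeff_single_two_mul_sq]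
    simp only [this, Finset.sum_add_distrib, Finset.sum_ite_eq', Finset.mem_univ, if_pos]
    exact CharTwo.add_self_eq_zero _
  · simp [coeff_single_two_mul_XX q i j _ hij]

lemma Lsq_Jideal {d : ℕ} (p : MvPolynomial (Fin d) (ZMod 2)) (hp : p ∈ Jideal d) :
    Lsq d p = 0 := by
  rw [Jideal, Ideal.span] at hp
  rcases Submodule.mem_span_set.mp hp with ⟨c, hc, rfl⟩
  rw [Finsupp.sum, map_sum]
  refine Finset.sum_eq_zero fun g hg => ?_
  rw [smul_eq_mul]
  exact Lsq_gen _ g (hc hg)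

lemma degree_two_classify {d : ℕ} (m : Fin d →₀ ℕ) (hm : (m.sum fun _ n => n) = 2) :
    ∃ a b : Fin d, m = Finsupp.single a 1 + Finsupp.single b 1 := by
  have hcard : Multiset.card m.toMultiset = 2 := by
    rw [Finsupp.card_toMultiset]; exact hm
  obtain ⟨a, b, hab⟩ := Multiset.card_eq_two.mp hcard
  refine ⟨a, b, ?_⟩
  have h2 : Finsupp.toMultiset (Finsupp.single a 1 + Finsupp.single b 1) = {a, b} := by
    rw [map_add, Finsupp.toMultiset_single, Finsupp.toMultiset_single]
    simp [Multiset.singleton_add]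
  have := congrArg Multiset.toFinsupp (hab.trans h2.symm)
  simpa [← Multiset.singleton_add, Multiset.toFinsupp_add, Multiset.toFinsupp_singleton] using this

lemma sq_sub_sq_mem {d : ℕ} (a i0 : Fin d) (c : ZMod 2) :
    (monomial (Finsupp.single a 2)) c - C c * X i0 ^ 2 ∈ Jideal d := by
  have hmono : ∀ x : Fin d, C c * X x ^ 2
      = (monomial (Finsupp.single x 2) c : MvPolynomial (Fin d) (ZMod 2)) := by
    intro x
    rw [X_pow_eq_monomial, C_apply, monomial_mul, zero_add, mul_one]
  by_cases h : a = i0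
  · subst h
    rw [hmono, sub_self]
    exact (Jideal d).zero_mem
  · have he : (monomial (Finsupp.single a 2)) c - C c * X i0 ^ 2
        = C c * (X a ^ 2 + X i0 ^ 2) := by
      rw [CharTwo.sub_eq_add, mul_add, hmono a]
    rw [he]
    exact Ideal.mul_mem_left _ _ (Ideal.subset_span (Or.inl ⟨a, i0, h, rfl⟩))

lemma XX_mem {d : ℕ} (a b : Fin d) (hab : a ≠ b) (c : ZMod 2) :
    (monomial (Finsupp.single a 1 + Finsupp.single b 1)) c ∈ Jideal d := by
  have he : (monomial (Finsupp.single a 1 + Finsupp.single b 1)) c = C c * (X a * X b) := by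
    rw [X, X, monomial_mul, C_apply, monomial_mul]
    simp
  rw [he]
  exact Ideal.mul_mem_left _ _ (Ideal.subset_span (Or.inr ⟨a, b, hab, rfl⟩))

lemma homog_deg {d : ℕ} {p : MvPolynomial (Fin d) (ZMod 2)} (hp : p.IsHomogeneous 2)
    {m : Fin d →₀ ℕ} (hm : coeff m p ≠ 0) : (m.sum fun _ n => n) = 2 := by
  have := hp hm
  rw [← this]
  simp [Finsupp.weight, Finsupp.sum, Finsupp.linearCombination]

lemma key_lemma {d : ℕ} (i0 : Fin d) (p : MvPolynomial (Fin d) (ZMod 2))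
    (hp : p.IsHomogeneous 2) : p - C (Lsq d p) * X i0 ^ 2 ∈ Jideal d := by
  have hL : C (Lsq d p) * X i0 ^ 2
      = ∑ m ∈ p.support, C (∑ i : Fin d, if m = Finsupp.single i 2 then coeff m p else 0)
          * X i0 ^ 2 := by
    rw [← Finset.sum_mul, ← map_sum, Finset.sum_comm]
    congr 2
    rw [Lsq_apply]
    refine Finset.sum_congr rfl fun i _ => ?_
    rw [Finset.sum_ite_eq']
    by_cases h : Finsupp.single i 2 ∈ p.support
    · simp [h]
    · simp [h, notMem_support_iff.mp h]
  rw [hL]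
  nth_rewrite 1 [p.as_sum]
  rw [← Finset.sum_sub_distrib]
  refine Ideal.sum_mem _ fun m hm => ?_
  obtain ⟨a, b, rfl⟩ := degree_two_classify m (homog_deg hp (mem_support_iff.mp hm))
  by_cases hab : a = b
  · subst hab
    have h2 : Finsupp.single a 1 + Finsupp.single a 1 = Finsupp.single a 2 := by
      rw [← Finsupp.single_add]
    rw [h2]
    have hsum : (∑ i : Fin d, if Finsupp.single a 2 = Finsupp.single i 2
        then coeff (Finsupp.single a 2) p else 0) = coeff (Finsupp.single a 2) p := by
      have : ∀ i : Fin d, (Finsupp.single a 2 = Finsupp.single i 2) ↔ i = a := by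
        intro i
        rw [Finsupp.single_left_inj (by norm_num : (2:ℕ) ≠ 0)]
        exact eq_comm
      simp [this]
    rw [hsum]
    exact sq_sub_sq_mem a i0 _
  · have hz : ∀ i : Fin d,
        ¬(Finsupp.single a 1 + Finsupp.single b 1 = Finsupp.single i 2) := by
      intro i h
      have ha := DFunLike.congr_fun h a
      have hb := DFunLike.congr_fun h b
      simp only [Finsupp.add_apply, Finsupp.single_apply, if_pos rfl] at ha hb
      split_ifs at ha hb <;> omega
    simp only [hz, if_false, Finset.sum_const_zero, map_zero, zero_mul, sub_zero]
    exact XX_mem a b hab _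

/-- `x₁² ∉ J`, and every homogeneous quadratic is congruent mod `J`
to `0` or to `x₁²`. -/
theorem degree_two_piece (d : ℕ) (hd : 2 ≤ d) :
    X (⟨0, by omega⟩ : Fin d) ^ 2 ∉ Jideal d ∧
    ∀ p : MvPolynomial (Fin d) (ZMod 2), p.IsHomogeneous 2 →
      p ∈ Jideal d ∨ p - X (⟨0, by omega⟩ : Fin d) ^ 2 ∈ Jideal d := by
  set i0 : Fin d := ⟨0, by omega⟩
  constructor
  · intro h
    have hz := Lsq_Jideal _ h
    have hone : Lsq d (X i0 ^ 2 : MvPolynomial (Fin d) (ZMod 2)) = 1 := by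
      rw [Lsq_apply]
      have : ∀ i : Fin d, coeff (Finsupp.single i 2) (X i0 ^ 2 : MvPolynomial (Fin d) (ZMod 2))
          = if i = i0 then 1 else 0 := by
        intro i
        rw [X_pow_eq_monomial, coeff_monomial]
        simp only [Finsupp.single_left_inj (by norm_num : (2:ℕ) ≠ 0)]
        simp [eq_comm]
      simp [this]
    rw [hone] at hz
    exact one_ne_zero hz
  · intro p hp
    have hkey := key_lemma i0 p hp
    rcases (by decide : ∀ x : ZMod 2, x = 0 ∨ x = 1) (Lsq d p) with h0 | h1
    · left
      rw [h0] at hkey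
      simpa using hkey
    · right
      rw [h1] at hkey
      simpa using hkey
end

section
/- Let d ≥ 2 and 1 ≤ k < d, and let f : F_2[x_1,…,x_d] → F_2[y_1,…,y_k] be an F_2-algebra homomorphism such that f(x_i) is a homogeneous polynomial of degree 1 for every i. Then for every homogeneous polynomial p ∈ F_2[x_1,…,x_d] of degree at least 2, the image f(p) lies in the ideal of F_2[y_1,…,y_k] generated by f(J). In particular f(x_1²) lies in the ideal generated by f(J). -/
open MvPolynomial

lemma degree_one_eq_single {σ : Type*} {m : σ →₀ ℕ} (h : m.degree = 1) :
    ∃ j, m = Finsupp.single j 1 := by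
  classical
  have hne : m.support.Nonempty := by
    rcases Finset.eq_empty_or_nonempty m.support with he | hne
    · exfalso; rw [Finsupp.degree_apply, he] at h; simp at h
    · exact hne
  obtain ⟨j, hj⟩ := hne
  refine ⟨j, ?_⟩
  have hsum : m j + ∑ i ∈ m.support.erase j, m i = 1 := by
    rw [Finset.add_sum_erase _ _ hj]; exact h
  have hj1 : 1 ≤ m j := Nat.one_le_iff_ne_zero.mpr (Finsupp.mem_support_iff.mp hj)
  have hrest : ∑ i ∈ m.support.erase j, m i = 0 := by omega
  have hmj : m j = 1 := by omega
  ext i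
  by_cases hij : i = j
  · subst hij; simp [hmj]
  · rw [Finsupp.single_apply, if_neg (fun hh => hij hh.symm)]
    by_contra hne0
    have hi : i ∈ m.support.erase j :=
      Finset.mem_erase.mpr ⟨hij, Finsupp.mem_support_iff.mpr hne0⟩
    exact hne0 ((Finset.sum_eq_zero_iff).mp hrest i hi)

lemma homog_one_eq {k : ℕ} (p : MvPolynomial (Fin k) (ZMod 2)) (hp : p.IsHomogeneous 1) :
    p = ∑ j : Fin k, C (coeff (Finsupp.single j 1) p) * X j := by
  ext m
  rw [coeff_sum]
  simp only [coeff_C_mul, coeff_X']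
  by_cases hm : ∃ j, Finsupp.single j 1 = m
  · obtain ⟨j, hj⟩ := hm
    rw [Finset.sum_eq_single j]
    · rw [if_pos hj, mul_one, hj]
    · intro j' _ hj'
      rw [if_neg, mul_zero]
      intro hc
      exact hj' ((Finsupp.single_left_inj one_ne_zero).mp (hc.trans hj.symm))
    · intro h; exact absurd (Finset.mem_univ j) h
  · have h0 : coeff m p = 0 := by
      by_contra hc
      have hdeg : m.degree = 1 := by
        have := hp hc
        rw [Finsupp.degree_eq_weight_one]
        exact this
      obtain ⟨j, hj⟩ := degree_one_eq_single hdeg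
      exact hm ⟨j, hj.symm⟩
    rw [h0]
    exact (Finset.sum_eq_zero fun j _ => by
      rw [if_neg (fun hc => hm ⟨j, hc⟩), mul_zero]).symm

/-- if `k < d` and `f : F₂[x₁,…,x_d] → F₂[y₁,…,y_k]` is an algebra map
sending each `x_i` to a homogeneous linear polynomial, then the image under `f` of any
homogeneous polynomial of degree at least `2` lies in the ideal generated by `f(J)`;
in particular `f(x₁²)` does. -/
theorem image_of_J (d k : ℕ) (hd : 2 ≤ d) (hk : 1 ≤ k) (hkd : k < d)
    (f : MvPolynomial (Fin d) (ZMod 2) →ₐ[ZMod 2] MvPolynomial (Fin k) (ZMod 2))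
    (hf : ∀ i : Fin d, (f (X i)).IsHomogeneous 1) :
    (∀ m : ℕ, 2 ≤ m → ∀ p : MvPolynomial (Fin d) (ZMod 2), p.IsHomogeneous m →
      f p ∈ Ideal.span (f '' (Jideal d : Set (MvPolynomial (Fin d) (ZMod 2))))) ∧
    f (X (⟨0, by omega⟩ : Fin d) ^ 2) ∈
      Ideal.span (f '' (Jideal d : Set (MvPolynomial (Fin d) (ZMod 2)))) := by
  classical
  set I := Ideal.span (f '' (Jideal d : Set (MvPolynomial (Fin d) (ZMod 2)))) with hIdef
  have h2 : ∀ a : MvPolynomial (Fin k) (ZMod 2), a + a = 0 := fun a => by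
    rw [← two_smul (ZMod 2) a, (by decide : (2 : ZMod 2) = 0), zero_smul]
  -- products of distinct images are in I
  have hmulmem : ∀ i j : Fin d, i ≠ j → f (X i) * f (X j) ∈ I := by
    intro i j hij
    have h1 : (X i * X j : MvPolynomial (Fin d) (ZMod 2)) ∈ Jideal d :=
      Ideal.subset_span (Or.inr ⟨i, j, hij, rfl⟩)
    have := Ideal.subset_span (Set.mem_image_of_mem f h1)
    rwa [map_mul] at this
  have haddmem : ∀ i j : Fin d, i ≠ j → f (X i) ^ 2 + f (X j) ^ 2 ∈ I := by
    intro i j hij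
    have h1 : (X i ^ 2 + X j ^ 2 : MvPolynomial (Fin d) (ZMod 2)) ∈ Jideal d :=
      Ideal.subset_span (Or.inl ⟨i, j, hij, rfl⟩)
    have := Ideal.subset_span (Set.mem_image_of_mem f h1)
    rwa [map_add, map_pow, map_pow] at this
  -- linear dependence of the images
  have hdep : ¬ LinearIndependent (ZMod 2)
      (fun i : Fin d => (fun j : Fin k => coeff (Finsupp.single j 1) (f (X i)))) := by
    intro h
    have := h.fintype_card_le_finrank
    rw [Module.finrank_fintype_fun_eq_card] at this
    simp only [Fintype.card_fin] at this
    omega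
  obtain ⟨g, hg0, i0, hgi0⟩ := Fintype.not_linearIndependent_iff.mp hdep
  have hone : ∀ a : ZMod 2, a ≠ 0 → a = 1 := by decide
  have hgi0' : g i0 = 1 := hone _ hgi0
  have heq : ∀ a b : MvPolynomial (Fin k) (ZMod 2), a + b = 0 → a = b := fun a b h => by
    calc a = a + (b + b) := by rw [h2, add_zero]
      _ = (a + b) + b := by ring
      _ = b := by rw [h, zero_add]
  -- the corresponding combination of images is zero
  have hq0 : ∑ i : Fin d, g i • f (X i) = 0 := by
    set q := ∑ i : Fin d, g i • f (X i) with hq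
    have hqh : q.IsHomogeneous 1 := by
      rw [← mem_homogeneousSubmodule]
      exact Submodule.sum_mem _ fun i _ =>
        Submodule.smul_mem _ _ ((mem_homogeneousSubmodule _ _).mpr (hf i))
    have hco : ∀ j : Fin k, coeff (Finsupp.single j 1) q = 0 := by
      intro j
      have := congrFun hg0 j
      simp only [Finset.sum_apply, Pi.smul_apply, Pi.zero_apply] at this
      rw [hq, coeff_sum]
      simpa only [coeff_smul] using this
    rw [homog_one_eq q hqh]
    exact Finset.sum_eq_zero fun j _ => by rw [hco j, map_zero, zero_mul]
  -- f (X i0) is the sum of the other images (with coefficients)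
  have hi0eq : f (X i0) = ∑ i ∈ Finset.univ.erase i0, g i • f (X i) := by
    apply heq
    have h := Finset.add_sum_erase Finset.univ (fun i => g i • f (X i)) (Finset.mem_univ i0)
    rw [hq0] at h
    simp only [hgi0', one_smul] at h
    exact h
  -- hence f (X i0)^2 ∈ I
  have hsq0 : f (X i0) ^ 2 ∈ I := by
    have : f (X i0) ^ 2 = ∑ i ∈ Finset.univ.erase i0, g i • (f (X i0) * f (X i)) := by
      rw [sq]
      nth_rewrite 2 [hi0eq]
      rw [Finset.mul_sum]
      exact Finset.sum_congr rfl fun i _ => (mul_smul_comm _ _ _)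
    rw [this]
    exact Submodule.sum_mem _ fun i hi =>
      Submodule.smul_of_tower_mem _ _ (hmulmem i0 i (Finset.ne_of_mem_erase hi).symm)
  -- hence all f (X i)^2 ∈ I
  have hsq : ∀ i : Fin d, f (X i) ^ 2 ∈ I := by
    intro i
    by_cases hii : i = i0
    · rw [hii]; exact hsq0
    · have : f (X i) ^ 2 = (f (X i) ^ 2 + f (X i0) ^ 2) + f (X i0) ^ 2 := by
        rw [add_assoc, h2, add_zero]
      rw [this]
      exact Ideal.add_mem _ (haddmem i i0 hii) hsq0
  -- images of monomials of degree ≥ 2 are in I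
  have hmono : ∀ m : Fin d →₀ ℕ, 2 ≤ m.degree → f (monomial m 1) ∈ I := by
    intro m hm
    have hfm : f (monomial m 1) = ∏ i ∈ m.support, f (X i) ^ m i := by
      rw [monomial_eq, C_1, one_mul, Finsupp.prod, map_prod]
      exact Finset.prod_congr rfl fun i _ => by rw [map_pow]
    have hsupne : m.support.Nonempty := by
      rcases Finset.eq_empty_or_nonempty m.support with he | hne
      · exfalso; rw [Finsupp.degree_apply, he] at hm; simp at hm
      · exact hne
    obtain ⟨i, hi⟩ := hsupne
    have hsplit : f (monomial m 1) =
        f (X i) ^ m i * ∏ j ∈ m.support.erase i, f (X j) ^ m j := by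
      rw [hfm]; exact (Finset.mul_prod_erase _ _ hi).symm
    by_cases hcase : 2 ≤ m i
    · have : f (monomial m 1) = f (X i) ^ 2 *
          (f (X i) ^ (m i - 2) * ∏ j ∈ m.support.erase i, f (X j) ^ m j) := by
        rw [hsplit, ← mul_assoc, ← pow_add]
        congr 2
        omega
      rw [this]
      exact Ideal.mul_mem_right _ _ (hsq i)
    · -- m i = 1, so there is another variable j in the support
      have hmi : m i = 1 := by
        have := Finsupp.mem_support_iff.mp hi
        omega
      have hrest : 1 ≤ ∑ j ∈ m.support.erase i, m j := by
        have : m i + ∑ j ∈ m.support.erase i, m j = m.degree :=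
          Finset.add_sum_erase _ _ hi
        omega
      have herne : (m.support.erase i).Nonempty := by
        rcases Finset.eq_empty_or_nonempty (m.support.erase i) with he | hne
        · exfalso; rw [he] at hrest; simp at hrest
        · exact hne
      obtain ⟨j, hj⟩ := herne
      have hji : j ≠ i := Finset.ne_of_mem_erase hj
      have hmj : 1 ≤ m j := Nat.one_le_iff_ne_zero.mpr
        (Finsupp.mem_support_iff.mp (Finset.mem_of_mem_erase hj))
      have hx : f (X i) ^ m i = f (X i) * f (X i) ^ (m i - 1) := by
        conv_lhs => rw [show m i = (m i - 1) + 1 by omega]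
        rw [pow_succ]; ring
      have hy : f (X j) ^ m j = f (X j) * f (X j) ^ (m j - 1) := by
        conv_lhs => rw [show m j = (m j - 1) + 1 by omega]
        rw [pow_succ]; ring
      have : f (monomial m 1) = (f (X i) * f (X j)) *
          (f (X i) ^ (m i - 1) * (f (X j) ^ (m j - 1) *
            ∏ l ∈ (m.support.erase i).erase j, f (X l) ^ m l)) := by
        rw [hsplit, ← Finset.mul_prod_erase _ _ hj, hx, hy]
        ring
      rw [this]
      exact Ideal.mul_mem_right _ _ (hmulmem i j (fun h => hji h.symm))
  -- main statement
  have main : ∀ m : ℕ, 2 ≤ m → ∀ p : MvPolynomial (Fin d) (ZMod 2), p.IsHomogeneous m →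
      f p ∈ I := by
    intro m hm p hp
    have hone : ∀ a : ZMod 2, a ≠ 0 → a = 1 := by decide
    have hrepr : p = ∑ v ∈ p.support, monomial v (coeff v p) :=
      (support_sum_monomial_coeff p).symm
    rw [hrepr, map_sum]
    apply Ideal.sum_mem
    intro v hv
    have hc : coeff v p ≠ 0 := mem_support_iff.mp hv
    have hc1 : coeff v p = 1 := hone _ hc
    have hvdeg : v.degree = m := by
      rw [Finsupp.degree_eq_weight_one]
      exact hp hc
    rw [hc1]
    exact hmono v (by omega)
  refine ⟨main, ?_⟩
  exact main 2 le_rfl _ (isHomogeneous_X_pow _ 2)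
end

section
/- Let d ≥ 2 and let F ∈ S^{d×n(d)} be the matrix defined below, where n(d) = d(d+1)/2 + 2 if d ≡ 0 mod 2, n(d) = d(d+1)/2 + 1 if d ≡ 1 mod 4, and n(d) = d(d+1)/2 + 3 if d ≡ 3 mod 4. Then F is free and effective: for every nonzero x ∈ F_2^d there exists a column index j with s_j(x) = 1, and there exists a column index j' with s_{j'}(x) ∈ {2,3}, where s_j(x) denotes the sum in the group S of the entries F_{ij} over all rows i with x_i = 1. -/
open MvPolynomial

lemma colSum_eq {d : ℕ} {ι : Type*} (A : Matrix (Fin d) ι S4) (x : Fin d → ZMod 2) (j : ι) :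
    colSum A x j = (∑ i, x i * (A i j).1, ∑ i, x i * (A i j).2) := by
  unfold colSum
  ext
  · simp [Prod.fst_sum, nsmul_eq_mul, ZMod.natCast_val, ZMod.cast_id]
  · simp [Prod.snd_sum, nsmul_eq_mul, ZMod.natCast_val, ZMod.cast_id]

lemma colSum_inl {d : ℕ} {ι κ : Type*} (A : Matrix (Fin d) ι S4) (B : Matrix (Fin d) κ S4)
    (x : Fin d → ZMod 2) (j : ι) :
    colSum (Matrix.fromCols A B) x (Sum.inl j) = colSum A x j := rfl

lemma colSum_inr {d : ℕ} {ι κ : Type*} (A : Matrix (Fin d) ι S4) (B : Matrix (Fin d) κ S4)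
    (x : Fin d → ZMod 2) (j : κ) :
    colSum (Matrix.fromCols A B) x (Sum.inr j) = colSum B x j := rfl

lemma colSum_A1 {d : ℕ} (x : Fin d → ZMod 2) (p : PairIdx d) :
    colSum (matA1 d) x p = (x p.1.1, x p.1.2) := by
  rw [colSum_eq]
  have hne : p.1.1 ≠ p.1.2 := ne_of_lt p.2
  congr 1
  · rw [Finset.sum_eq_single p.1.1]
    · simp [matA1, s2]
    · intro i _ hi
      by_cases h2 : i = p.1.2 <;> simp [matA1, hi, h2, hne.symm, s3, s0]
    · simp
  · rw [Finset.sum_eq_single p.1.2]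
    · simp [matA1, hne.symm, s3]
    · intro i _ hi
      by_cases h2 : i = p.1.1 <;> simp [matA1, hi, h2, hne, s2, s0]
    · simp

lemma colSum_A0 {d : ℕ} (hd : 2 ≤ d) (x : Fin d → ZMod 2) (l : Fin (d - 1)) :
    colSum (matA0 d) x l =
      (x ⟨l, by omega⟩ + x ⟨d - 1, by omega⟩, x ⟨l, by omega⟩ + x ⟨d - 1, by omega⟩) := by
  have hl : (l : ℕ) < d - 1 := l.isLt
  rw [colSum_eq]
  have key : ∀ k : S4 → ZMod 2, k s1 = 1 → k s0 = 0 →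
      ∑ i, x i * k (matA0 d i l) = x ⟨l, by omega⟩ + x ⟨d - 1, by omega⟩ := by
    intro k hk1 hk0
    have : ∀ i : Fin d, x i * k (matA0 d i l) =
        (if i = (⟨l, by omega⟩ : Fin d) then x i else 0) +
        (if i = (⟨d - 1, by omega⟩ : Fin d) then x i else 0) := by
      intro i
      rcases i with ⟨iv, hiv⟩
      by_cases h1 : iv = (l : ℕ) <;> by_cases h2 : iv = d - 1 <;>
        simp [matA0, h1, h2, hk1, hk0, Fin.ext_iff] <;> omega
    rw [Finset.sum_congr rfl (fun i _ => this i), Finset.sum_add_distrib]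
    simp
  exact Prod.ext (key (·.1) rfl rfl) (key (·.2) rfl rfl)

lemma colSum_C {d : ℕ} (hd : 2 ≤ d) (x : Fin d → ZMod 2) (j : Fin 1) :
    colSum (matC d) x j = (x ⟨0, by omega⟩, 0) := by
  rw [colSum_eq]
  congr 1
  · rw [Finset.sum_eq_single (⟨0, by omega⟩ : Fin d)]
    · simp [matC, s2]
    · intro i _ hi
      have : (i : ℕ) ≠ 0 := fun h => hi (Fin.ext h)
      simp [matC, this, s0]
    · simp
  · apply Finset.sum_eq_zero
    intro i _
    by_cases h : (i : ℕ) = 0 <;> simp [matC, h, s2, s0]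

lemma colSum_B {d : ℕ} (x : Fin d → ZMod 2) (j : Fin 1) :
    colSum (matB d) x j = (∑ i, x i, 0) := by
  rw [colSum_eq]
  simp [matB, s2]

/-- for `d ≥ 2`, the matrix `F` (given per residue of `d`: `F = [A,B,C,C]` if
`d ≡ 0 mod 2`, `F = [A,B,B]` if `d ≡ 1 mod 4`, `F = [A,C,C,C,C]` if `d ≡ 3 mod 4`)
is free and effective: for every nonzero `x ∈ F₂^d` some column sum `s_j(x)` equals `1`,
and some column sum `s_{j'}(x)` lies in `{2,3}`. -/
theorem matF_free_effective (d : ℕ) (hd : 2 ≤ d) :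
    (d % 2 = 0 → ∀ x : Fin d → ZMod 2, x ≠ 0 →
      (∃ j, colSum (matE0 d) x j = s1) ∧
      (∃ j', colSum (matE0 d) x j' = s2 ∨ colSum (matE0 d) x j' = s3)) ∧
    (d % 4 = 1 → ∀ x : Fin d → ZMod 2, x ≠ 0 →
      (∃ j, colSum (matE1 d) x j = s1) ∧
      (∃ j', colSum (matE1 d) x j' = s2 ∨ colSum (matE1 d) x j' = s3)) ∧
    (d % 4 = 3 → ∀ x : Fin d → ZMod 2, x ≠ 0 →
      (∃ j, colSum (matF3 d) x j = s1) ∧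
      (∃ j', colSum (matF3 d) x j' = s2 ∨ colSum (matF3 d) x j' = s3)) := by
  have two : ∀ a b : ZMod 2, a ≠ b → a + b = 1 := by decide
  have two1 : ∀ a : ZMod 2, a ≠ 0 → a = 1 := by decide
  have two23 : ∀ a b : ZMod 2, a ≠ b → ((a, b) : S4) = s2 ∨ ((a, b) : S4) = s3 := by decide
  -- all-ones extraction
  have hconst : ∀ x : Fin d → ZMod 2, x ≠ 0 → (∀ a b : Fin d, x a = x b) → ∀ i, x i = 1 := by
    intro x hx hc i
    obtain ⟨i0, hi0⟩ := Function.ne_iff.mp hx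
    rw [hc i i0]
    exact two1 _ hi0
  -- freeness from the A-part
  have free : ∀ x : Fin d → ZMod 2, x ≠ 0 →
      ∃ j, colSum (matA d) x j = s1 := by
    intro x hx
    by_cases hc : ∀ i : Fin d, x i = x ⟨d - 1, by omega⟩
    · have hall : ∀ i, x i = 1 := hconst x hx (fun a b => (hc a).trans (hc b).symm)
      refine ⟨Sum.inr ⟨(⟨0, by omega⟩, ⟨1, by omega⟩), by simp [Fin.lt_def]⟩, ?_⟩
      have h1 : colSum (matA d) x (Sum.inr ⟨(⟨0, by omega⟩, ⟨1, by omega⟩), by simp [Fin.lt_def]⟩)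
          = colSum (matA1 d) x ⟨(⟨0, by omega⟩, ⟨1, by omega⟩), by simp [Fin.lt_def]⟩ := rfl
      rw [h1, colSum_A1]
      simp [hall, s1]
    · push_neg at hc
      obtain ⟨i, hi⟩ := hc
      have hiv : (i : ℕ) < d - 1 := by
        by_contra h
        exact hi (congrArg x (Fin.ext (show (i : ℕ) = d - 1 by omega)))
      refine ⟨Sum.inl ⟨(i : ℕ), hiv⟩, ?_⟩
      have h1 : colSum (matA d) x (Sum.inl ⟨(i : ℕ), hiv⟩)
          = colSum (matA0 d) x ⟨(i : ℕ), hiv⟩ := rfl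
      rw [h1, colSum_A0 hd]
      have h2 : (⟨((⟨(i : ℕ), hiv⟩ : Fin (d - 1)) : ℕ), by omega⟩ : Fin d) = i := Fin.ext rfl
      rw [h2]
      have := two _ _ hi
      simp [s1, this]
  -- effectiveness from the A₁-part, for non-constant x
  have effA1 : ∀ x : Fin d → ZMod 2, (∃ a b : Fin d, x a ≠ x b) →
      ∃ p : PairIdx d, colSum (matA1 d) x p = s2 ∨ colSum (matA1 d) x p = s3 := by
    rintro x ⟨a, b, hab⟩
    have hne : a ≠ b := fun h => hab (by rw [h])
    rcases lt_or_gt_of_ne hne with h | h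
    · exact ⟨⟨(a, b), h⟩, by rw [colSum_A1]; exact two23 _ _ hab⟩
    · exact ⟨⟨(b, a), h⟩, by rw [colSum_A1]; exact two23 _ _ (Ne.symm hab)⟩
  have hC : ∀ x : Fin d → ZMod 2, (∀ i, x i = 1) → ∀ j : Fin 1, colSum (matC d) x j = s2 := by
    intro x hall j
    rw [colSum_C hd, hall]
    rfl
  have hB : d % 2 = 1 → ∀ x : Fin d → ZMod 2, (∀ i, x i = 1) →
      ∀ j : Fin 1, colSum (matB d) x j = s2 := by
    intro hodd x hall j
    rw [colSum_B]
    have : ∑ i, x i = 1 := by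
      have : ∑ i : Fin d, x i = ∑ _i : Fin d, (1 : ZMod 2) :=
        Finset.sum_congr rfl (fun i _ => hall i)
      rw [this, Finset.sum_const, Finset.card_univ, Fintype.card_fin, nsmul_eq_mul, mul_one,
        ← ZMod.natCast_mod, hodd]
      rfl
    rw [this]
    rfl
  refine ⟨?_, ?_, ?_⟩
  · intro _ x hx
    constructor
    · obtain ⟨j, hj⟩ := free x hx
      exact ⟨Sum.inl j, hj⟩
    · by_cases hc : ∃ a b : Fin d, x a ≠ x b
      · obtain ⟨p, hp⟩ := effA1 x hc
        exact ⟨Sum.inl (Sum.inr p), hp⟩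
      · push_neg at hc
        have hall := hconst x hx hc
        exact ⟨Sum.inr (Sum.inr (Sum.inl 0)), Or.inl (hC x hall 0)⟩
  · intro h4 x hx
    constructor
    · obtain ⟨j, hj⟩ := free x hx
      exact ⟨Sum.inl j, hj⟩
    · by_cases hc : ∃ a b : Fin d, x a ≠ x b
      · obtain ⟨p, hp⟩ := effA1 x hc
        exact ⟨Sum.inl (Sum.inr p), hp⟩
      · push_neg at hc
        have hall := hconst x hx hc
        exact ⟨Sum.inr (Sum.inl 0), Or.inl (hB (by omega) x hall 0)⟩
  · intro h4 x hx
    constructor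
    · obtain ⟨j, hj⟩ := free x hx
      exact ⟨Sum.inl j, hj⟩
    · by_cases hc : ∃ a b : Fin d, x a ≠ x b
      · obtain ⟨p, hp⟩ := effA1 x hc
        exact ⟨Sum.inl (Sum.inr p), hp⟩
      · push_neg at hc
        have hall := hconst x hx hc
        exact ⟨Sum.inr (Sum.inl 0), Or.inl (hC x hall 0)⟩
end
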